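/- arXiv:2403.07754 — 2 statements merged into one kernel-verified Lean document; each statement's English description precedes it below -/
import Mathlib

section
/- Let x, y ∈ F_q^n with d(x, y) = d odd, e = (d-1)/2, t = e + ℓ with 1 ≤ ℓ < d/2, and suppose there exists u with d(x,u) = d(y,u) = (d+1)/2. Then |B_t(x) ∩ B_t(y)| ≥ Vol_q(ℓ - 1, n), where Vol_q(r, n) is the number of words in a Hamming ball of radius r in F_q^n. -/
open Finset

lemma sphere_card_eq {F : Type*} [Fintype F] [DecidableEq F] {n : ℕ}
    (u : Fin n → F) (i : ℕ) :
    (Finset.univ.filter (fun v : Fin n → F => hammingDist u v = i)).card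
      = Nat.choose n i * (Fintype.card F - 1) ^ i := by
  classical
  rw [Finset.card_eq_sum_card_fiberwise
    (f := fun v => Finset.univ.filter (fun j => v j ≠ u j))
    (t := Finset.powersetCard i Finset.univ)
    (by
      intro v hv
      simp only [mem_coe, mem_filter, mem_univ, true_and] at hv
      simp only [mem_coe, Finset.mem_powersetCard]
      refine ⟨Finset.subset_univ _, ?_⟩
      rw [← hv, hammingDist]
      exact Finset.card_nbij id (fun a ha => by simpa [ne_comm] using ha)
        (fun a _ b _ h => h) (fun a ha => ⟨a, by simpa [ne_comm] using ha, rfl⟩))]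
  have hfib : ∀ s ∈ Finset.powersetCard i (Finset.univ : Finset (Fin n)),
      ((Finset.univ.filter (fun v : Fin n → F => hammingDist u v = i)).filter
        (fun v => Finset.univ.filter (fun j => v j ≠ u j) = s)).card
        = (Fintype.card F - 1) ^ i := by
    intro s hs
    rw [Finset.mem_powersetCard] at hs
    have hset : ((Finset.univ.filter (fun v : Fin n → F => hammingDist u v = i)).filter
        (fun v => Finset.univ.filter (fun j => v j ≠ u j) = s))
        = Finset.univ.filter (fun v : Fin n → F => ∀ j, (v j ≠ u j ↔ j ∈ s)) := by
      ext v
      simp only [Finset.mem_filter, mem_univ, true_and]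
      constructor
      · rintro ⟨-, h2⟩ j
        rw [← h2]; simp
      · intro h
        have hsupp : Finset.univ.filter (fun j => v j ≠ u j) = s := by
          ext j; simp [h j]
        refine ⟨?_, hsupp⟩
        rw [hammingDist, ← hs.2, ← hsupp]
        exact Finset.card_nbij id (fun a ha => by simpa [ne_comm] using ha)
          (fun a _ b _ h => h) (fun a ha => ⟨a, by simpa [ne_comm] using ha, rfl⟩)
    rw [hset, ← Fintype.card_subtype]
    have e1 : {v : Fin n → F // ∀ j, (v j ≠ u j ↔ j ∈ s)} ≃ ∀ j, {a : F // a ≠ u j ↔ j ∈ s} :=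
      Equiv.subtypePiEquivPi (p := fun j (a : F) => a ≠ u j ↔ j ∈ s)
    rw [Fintype.card_congr e1, Fintype.card_pi]
    have hfac : ∀ j : Fin n, Fintype.card {a : F // a ≠ u j ↔ j ∈ s}
        = if j ∈ s then Fintype.card F - 1 else 1 := by
      intro j
      by_cases hj : j ∈ s
      · rw [if_pos hj]
        rw [Fintype.card_congr (Equiv.subtypeEquivRight (q := fun a : F => ¬ a = u j) (fun a => by simp [hj]))]
        rw [Fintype.card_subtype_compl, Fintype.card_subtype_eq]
      · rw [if_neg hj]
        rw [Fintype.card_congr (Equiv.subtypeEquivRight (q := fun a => a = u j)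
          (fun a => by simp [hj]))]
        exact Fintype.card_subtype_eq _
    calc ∏ j, Fintype.card {a : F // a ≠ u j ↔ j ∈ s}
        = ∏ j, (if j ∈ s then Fintype.card F - 1 else 1) := by
          exact Finset.prod_congr rfl (fun j _ => hfac j)
      _ = ∏ j ∈ Finset.univ ∩ s, (Fintype.card F - 1) := Finset.prod_ite_mem _ _ _
      _ = (Fintype.card F - 1) ^ i := by
          rw [Finset.univ_inter, Finset.prod_const, hs.2]
  rw [Finset.sum_congr rfl hfib, Finset.sum_const, Finset.card_powersetCard,
    Finset.card_univ, Fintype.card_fin, smul_eq_mul]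

theorem stmt_4 {F : Type*} [Fintype F] [DecidableEq F] {n : ℕ}
    (x y : Fin n → F) (d e t ℓ : ℕ) (hℓ : 1 ≤ ℓ) (hℓd : 2 * ℓ < d)
    (hd : hammingDist x y = d) (hodd : Odd d)
    (he : e = (d - 1) / 2) (ht : t = e + ℓ)
    (hu : ∃ u : Fin n → F, hammingDist x u = (d + 1) / 2 ∧ hammingDist y u = (d + 1) / 2) :
    ∑ i ∈ Finset.range ℓ, Nat.choose n i * (Fintype.card F - 1) ^ i ≤
      (Finset.univ.filter
        (fun v : Fin n → F => hammingDist v x ≤ t ∧ hammingDist v y ≤ t)).card := by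
  classical
  obtain ⟨u, hux, huy⟩ := hu
  obtain ⟨k, hk⟩ := hodd
  have hd1 : (d + 1) / 2 = k + 1 := by omega
  have hte : t = k + ℓ := by omega
  -- each sphere of radius i < ℓ around u is in the target set
  set T := (Finset.univ.filter
      (fun v : Fin n → F => hammingDist v x ≤ t ∧ hammingDist v y ≤ t)) with hT
  have hsub : ∀ i ∈ Finset.range ℓ,
      (Finset.univ.filter (fun v : Fin n → F => hammingDist u v = i)) ⊆ T := by
    intro i hi
    rw [Finset.mem_range] at hi
    intro v hv
    rw [Finset.mem_filter] at hv ⊢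
    refine ⟨Finset.mem_univ _, ?_, ?_⟩
    · calc hammingDist v x ≤ hammingDist v u + hammingDist u x := hammingDist_triangle _ _ _
        _ = i + (k + 1) := by rw [hammingDist_comm v u, hv.2, hammingDist_comm u x, hux, hd1]
        _ ≤ t := by omega
    · calc hammingDist v y ≤ hammingDist v u + hammingDist u y := hammingDist_triangle _ _ _
        _ = i + (k + 1) := by rw [hammingDist_comm v u, hv.2, hammingDist_comm u y, huy, hd1]
        _ ≤ t := by omega
  have hdisj : ∀ i ∈ Finset.range ℓ, ∀ j ∈ Finset.range ℓ, i ≠ j →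
      Disjoint (Finset.univ.filter (fun v : Fin n → F => hammingDist u v = i))
        (Finset.univ.filter (fun v : Fin n → F => hammingDist u v = j)) := by
    intro i _ j _ hij
    rw [Finset.disjoint_left]
    intro v hv1 hv2
    rw [Finset.mem_filter] at hv1 hv2
    exact hij (hv1.2 ▸ hv2.2)
  calc ∑ i ∈ Finset.range ℓ, Nat.choose n i * (Fintype.card F - 1) ^ i
      = ∑ i ∈ Finset.range ℓ,
          (Finset.univ.filter (fun v : Fin n → F => hammingDist u v = i)).card := by
        exact Finset.sum_congr rfl (fun i _ => (sphere_card_eq u i).symm)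
    _ = ((Finset.range ℓ).biUnion
          (fun i => Finset.univ.filter (fun v : Fin n → F => hammingDist u v = i))).card :=
        (Finset.card_biUnion hdisj).symm
    _ ≤ T.card := Finset.card_le_card (Finset.biUnion_subset.2 hsub)
end

section
/- Let M be the multiplicity matrix built from a set Y' of reads in F_q^n with parameter μ, and define the cost C(M) = Σ_{i,j} binomial(M_{i,j} + 1, 2). Then C(M) = n · binomial(μ|Y'| + 1, 2) − (μ²/2) · Σ_{u,v ∈ Y'} d(u, v), where the sum is over all ordered pairs of reads and d is the Hamming distance. -/
open Finset

private lemma twochoose (m : ℕ) : 2 * Nat.choose (m + 1) 2 = m * (m + 1) := by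
  have h2 : 2 ∣ (m + 1) * m := by
    rw [mul_comm]; exact (Nat.even_mul_succ_self m).two_dvd
  rw [Nat.choose_two_right, Nat.succ_sub_one, Nat.mul_div_cancel' h2]
  ring

theorem stmt_8 {F : Type*} [Fintype F] [DecidableEq F] {n : ℕ}
    (Y' : Finset (Fin n → F)) (μ : ℕ) (hμ : 0 < μ)
    (M : F → Fin n → ℕ)
    (hM : ∀ a j, M a j = μ * (Y'.filter (fun y => y j = a)).card) :
    ∑ a : F, ∑ j, Nat.choose (M a j + 1) 2 =
      n * Nat.choose (μ * Y'.card + 1) 2 -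
        μ ^ 2 * (∑ u ∈ Y', ∑ v ∈ Y', hammingDist u v) / 2 := by
  classical
  set N := Y'.card with hN
  set c : F → Fin n → ℕ := fun a j => (Y'.filter (fun y => y j = a)).card with hc
  -- fiberwise partition
  have hpart : ∀ j : Fin n, ∑ a : F, c a j = N := fun j =>
    (Finset.card_eq_sum_card_fiberwise (fun x _ => Finset.mem_univ (x j))).symm
  -- pair counting per column
  have hpair : ∀ j : Fin n,
      (∑ u ∈ Y', ∑ v ∈ Y', if u j = v j then 1 else 0) = ∑ a : F, c a j ^ 2 := by
    intro j
    have h1 : ∀ u ∈ Y', (∑ v ∈ Y', if u j = v j then 1 else 0) = c (u j) j := by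
      intro u hu
      show _ = (Y'.filter (fun y => y j = u j)).card
      rw [Finset.card_filter]
      exact Finset.sum_congr rfl fun v _ => by simp [eq_comm]
    rw [Finset.sum_congr rfl h1, ← Finset.sum_fiberwise' Y' (fun u => u j) (fun a => c a j)]
    refine Finset.sum_congr rfl fun a _ => ?_
    rw [Finset.sum_const, smul_eq_mul, sq]
  -- per column: neq-count + eq-count = N^2
  have hDj : ∀ j : Fin n,
      (∑ u ∈ Y', ∑ v ∈ Y', if u j ≠ v j then 1 else 0) + ∑ a : F, c a j ^ 2 = N ^ 2 := by
    intro j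
    rw [← hpair j, ← Finset.sum_add_distrib]
    have h1 : ∀ u ∈ Y',
        ((∑ v ∈ Y', if u j ≠ v j then 1 else 0) + ∑ v ∈ Y', if u j = v j then 1 else 0) = N := by
      intro u hu
      rw [← Finset.sum_add_distrib]
      have h2 : ∀ v ∈ Y', ((if u j ≠ v j then 1 else 0) + if u j = v j then 1 else 0) = 1 := by
        intro v hv
        by_cases h : u j = v j <;> simp [h]
      rw [Finset.sum_congr rfl h2, Finset.sum_const, smul_eq_mul, mul_one]
    rw [Finset.sum_congr rfl h1, Finset.sum_const, smul_eq_mul, sq]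
  -- column sum of choose
  have colX : ∀ j : Fin n, 2 * ∑ a : F, Nat.choose (μ * c a j + 1) 2 =
      μ ^ 2 * (∑ a : F, c a j ^ 2) + μ * N := by
    intro j
    rw [Finset.mul_sum]
    have h1 : ∀ a ∈ (univ : Finset F), 2 * Nat.choose (μ * c a j + 1) 2 =
        μ ^ 2 * c a j ^ 2 + μ * c a j := by
      intro a _
      rw [twochoose]; ring
    rw [Finset.sum_congr rfl h1, Finset.sum_add_distrib, ← Finset.mul_sum, ← Finset.mul_sum,
      hpart j]
  have colC : 2 * Nat.choose (μ * N + 1) 2 = μ ^ 2 * N ^ 2 + μ * N := by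
    rw [twochoose]; ring
  -- key per-column identity
  have key : ∀ j : Fin n,
      2 * (∑ a : F, Nat.choose (μ * c a j + 1) 2) +
        μ ^ 2 * (∑ u ∈ Y', ∑ v ∈ Y', if u j ≠ v j then 1 else 0) =
      2 * Nat.choose (μ * N + 1) 2 := by
    intro j
    have h1 := colX j
    have h2 : μ ^ 2 * (∑ u ∈ Y', ∑ v ∈ Y', if u j ≠ v j then 1 else 0) +
        μ ^ 2 * (∑ a : F, c a j ^ 2) = μ ^ 2 * N ^ 2 := by
      rw [← mul_add, hDj j]
    generalize μ ^ 2 * (∑ u ∈ Y', ∑ v ∈ Y', if u j ≠ v j then 1 else 0) = p at h2 ⊢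
    generalize μ ^ 2 * (∑ a : F, c a j ^ 2) = q at h1 h2
    generalize μ ^ 2 * N ^ 2 = r at h2 colC
    omega
  -- hamming distance as column sums
  have hham : (∑ u ∈ Y', ∑ v ∈ Y', hammingDist u v) =
      ∑ j : Fin n, ∑ u ∈ Y', ∑ v ∈ Y', if u j ≠ v j then 1 else 0 := by
    have h1 : ∀ u v : Fin n → F,
        hammingDist u v = ∑ j : Fin n, if u j ≠ v j then 1 else 0 := fun u v => by
      rw [hammingDist, Finset.card_filter]
    calc (∑ u ∈ Y', ∑ v ∈ Y', hammingDist u v)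
        = ∑ u ∈ Y', ∑ v ∈ Y', ∑ j : Fin n, if u j ≠ v j then 1 else 0 :=
          Finset.sum_congr rfl fun u _ => Finset.sum_congr rfl fun v _ => h1 u v
      _ = ∑ u ∈ Y', ∑ j : Fin n, ∑ v ∈ Y', if u j ≠ v j then 1 else 0 :=
          Finset.sum_congr rfl fun u _ => Finset.sum_comm
      _ = ∑ j : Fin n, ∑ u ∈ Y', ∑ v ∈ Y', if u j ≠ v j then 1 else 0 :=
          Finset.sum_comm
  -- reorder the main sum
  have hL : (∑ a : F, ∑ j, Nat.choose (M a j + 1) 2) =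
      ∑ j : Fin n, ∑ a : F, Nat.choose (μ * c a j + 1) 2 :=
    calc (∑ a : F, ∑ j, Nat.choose (M a j + 1) 2)
        = ∑ a : F, ∑ j, Nat.choose (μ * c a j + 1) 2 :=
          Finset.sum_congr rfl fun a _ => Finset.sum_congr rfl fun j _ => by rw [hM]
      _ = ∑ j : Fin n, ∑ a : F, Nat.choose (μ * c a j + 1) 2 := Finset.sum_comm
  have main : 2 * (∑ a : F, ∑ j, Nat.choose (M a j + 1) 2) +
      μ ^ 2 * (∑ u ∈ Y', ∑ v ∈ Y', hammingDist u v) =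
      2 * (n * Nat.choose (μ * N + 1) 2) := by
    rw [hL, hham, Finset.mul_sum, Finset.mul_sum, ← Finset.sum_add_distrib,
      Finset.sum_congr rfl fun j _ => key j, Finset.sum_const, Finset.card_univ,
      Fintype.card_fin, smul_eq_mul]
    ring
  generalize hb : μ ^ 2 * (∑ u ∈ Y', ∑ v ∈ Y', hammingDist u v) = b at main ⊢
  generalize hk : n * Nat.choose (μ * N + 1) 2 = k at main ⊢
  generalize hl : (∑ a : F, ∑ j, Nat.choose (M a j + 1) 2) = L at main ⊢
  clear * - main
  omega
end
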